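/- Let A > 0 and T > 0, and suppose (n_k)_{k≥1} is a sequence of nonnegative real numbers with ∑_{k=1}^∞ n_k = T and n_k ≤ A·e^{k} for all k ≥ 1. Then ∑_{k=1}^∞ n_k·e^{−k} ≤ T if T < A, and ∑_{k=1}^∞ n_k·e^{−k} ≤ A·(ln(T/A) + 1) if T ≥ A. -/
import Mathlib


/-- If `(n_k)_{k≥1}` are nonnegative reals with `∑ n_k = T` and `n_k ≤ A·e^{k}`, then
`∑ n_k·e^{−k} ≤ T` when `T < A`, and `∑ n_k·e^{−k} ≤ A·(ln(T/A) + 1)` when `T ≥ A`. -/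
theorem tsum_discounted_le_log {A T : ℝ} (hA : 0 < A) (hT : 0 < T)
    (n : ℕ → ℝ) (hnonneg : ∀ k, 1 ≤ k → 0 ≤ n k)
    (hsum : HasSum (fun k : ℕ => n (k + 1)) T)
    (hbound : ∀ k, 1 ≤ k → n k ≤ A * Real.exp k) :
    (T < A → ∑' k : ℕ, n (k + 1) * Real.exp (-((k : ℝ) + 1)) ≤ T) ∧
    (A ≤ T → ∑' k : ℕ, n (k + 1) * Real.exp (-((k : ℝ) + 1))
      ≤ A * (Real.log (T / A) + 1)) := by
  have hn : ∀ k : ℕ, 0 ≤ n (k + 1) := fun k => hnonneg (k + 1) (by omega)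
  have hexp1 : ∀ k : ℕ, Real.exp (-((k : ℝ) + 1)) ≤ 1 := fun k =>
    Real.exp_le_one_iff.2 (by nlinarith [Nat.cast_nonneg (α := ℝ) k])
  have hterm_le : ∀ k : ℕ, n (k + 1) * Real.exp (-((k : ℝ) + 1)) ≤ n (k + 1) := fun k => by
    nlinarith [hn k, hexp1 k, Real.exp_pos (-((k : ℝ) + 1))]
  have hterm_nonneg : ∀ k : ℕ, 0 ≤ n (k + 1) * Real.exp (-((k : ℝ) + 1)) := fun k =>
    mul_nonneg (hn k) (Real.exp_pos _).le
  have hS : Summable (fun k : ℕ => n (k + 1) * Real.exp (-((k : ℝ) + 1))) :=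
    Summable.of_nonneg_of_le hterm_nonneg hterm_le hsum.summable
  constructor
  · intro _
    calc ∑' k : ℕ, n (k + 1) * Real.exp (-((k : ℝ) + 1))
        ≤ ∑' k : ℕ, n (k + 1) := Summable.tsum_le_tsum hterm_le hS hsum.summable
      _ = T := hsum.tsum_eq
  · intro hAT
    set L := Real.log (T / A) with hLdef
    have hTA1 : (1 : ℝ) ≤ T / A := (one_le_div hA).2 hAT
    have hL0 : 0 ≤ L := Real.log_nonneg hTA1
    have hTeq : A * Real.exp L = T := by
      rw [hLdef, Real.exp_log (by positivity)]
      field_simp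
    set m : ℕ := ⌊L⌋₊ + 1 with hmdef
    have hLm : L < (m : ℝ) := by
      have := Nat.lt_floor_add_one L
      push_cast [hmdef]
      linarith
    have hm1 : (m : ℝ) - 1 ≤ L := by
      have := Nat.floor_le hL0
      push_cast [hmdef]
      linarith
    set g : ℕ → ℝ := fun k => A * max 0 (1 - Real.exp (((k : ℝ) + 1) - m)) with hgdef
    have key : ∀ k : ℕ, n (k + 1) * Real.exp (-((k : ℝ) + 1)) ≤
        n (k + 1) * Real.exp (-(m : ℝ)) + g k := by
      intro k
      simp only [hgdef]
      have hmax : 0 ≤ max 0 (1 - Real.exp (((k : ℝ) + 1) - m)) := le_max_left _ _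
      rcases le_or_gt (m : ℝ) ((k : ℝ) + 1) with h | h
      · have h1 : Real.exp (-((k : ℝ) + 1)) ≤ Real.exp (-(m : ℝ)) :=
          Real.exp_le_exp.2 (by linarith)
        nlinarith [hn k, mul_nonneg hA.le hmax]
      · have hb : n (k + 1) ≤ A * Real.exp ((k : ℕ) + 1 : ℕ) := hbound (k + 1) (by omega)
        have hb' : n (k + 1) ≤ A * Real.exp ((k : ℝ) + 1) := by
          convert hb using 3; push_cast; ring
        have e1 : Real.exp ((k : ℝ) + 1) * Real.exp (-((k : ℝ) + 1)) = 1 := by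
          rw [← Real.exp_add, add_neg_cancel, Real.exp_zero]
        have e2 : Real.exp ((k : ℝ) + 1) * Real.exp (-(m : ℝ)) =
            Real.exp (((k : ℝ) + 1) - m) := by
          rw [← Real.exp_add]; congr 1
        have hmax2 : 1 - Real.exp (((k : ℝ) + 1) - m) ≤
            max 0 (1 - Real.exp (((k : ℝ) + 1) - m)) := le_max_right _ _
        have h2 : Real.exp (-(m : ℝ)) ≤ Real.exp (-((k : ℝ) + 1)) :=
          Real.exp_le_exp.2 (by linarith)
        nlinarith [hn k, Real.exp_pos ((k : ℝ) + 1)]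
    have hg0 : ∀ k ∉ Finset.range (m - 1), g k = 0 := by
      intro k hk
      simp only [Finset.mem_range, not_lt] at hk
      have hmk : (m : ℝ) ≤ (k : ℝ) + 1 := by
        have : m ≤ k + 1 := by omega
        exact_mod_cast this
      have : (1 : ℝ) ≤ Real.exp (((k : ℝ) + 1) - m) := Real.one_le_exp (by linarith)
      simp [hgdef, max_eq_left (by linarith : 1 - Real.exp (((k : ℝ) + 1) - m) ≤ 0)]
    have hgsummable : Summable g := summable_of_ne_finset_zero hg0
    have hgle : ∑' k : ℕ, g k ≤ ((m : ℝ) - 1) * A := by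
      rw [tsum_eq_sum hg0]
      have : ∀ k ∈ Finset.range (m - 1), g k ≤ A := by
        intro k _
        simp only [hgdef]
        have : max 0 (1 - Real.exp (((k : ℝ) + 1) - m)) ≤ 1 := by
          have := Real.exp_pos (((k : ℝ) + 1) - m)
          apply max_le <;> linarith
        nlinarith
      calc ∑ k ∈ Finset.range (m - 1), g k ≤ ∑ k ∈ Finset.range (m - 1), A :=
            Finset.sum_le_sum this
        _ = ((m - 1 : ℕ) : ℝ) * A := by rw [Finset.sum_const, Finset.card_range, nsmul_eq_mul]
        _ ≤ ((m : ℝ) - 1) * A := by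
            have : ((m - 1 : ℕ) : ℝ) ≤ (m : ℝ) - 1 := by
              have : 1 ≤ m := by omega
              push_cast [Nat.cast_sub this]
              linarith
            nlinarith
    have hsum2 : Summable (fun k : ℕ => n (k + 1) * Real.exp (-(m : ℝ))) :=
      hsum.summable.mul_right _
    have hTm : T * Real.exp (-(m : ℝ)) ≤ A := by
      rw [← hTeq]
      have : Real.exp L * Real.exp (-(m : ℝ)) = Real.exp (L - m) := by
        rw [← Real.exp_add]; congr 1
      have h1 : Real.exp (L - (m : ℝ)) ≤ 1 := Real.exp_le_one_iff.2 (by linarith)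
      nlinarith
    calc ∑' k : ℕ, n (k + 1) * Real.exp (-((k : ℝ) + 1))
        ≤ ∑' k : ℕ, (n (k + 1) * Real.exp (-(m : ℝ)) + g k) :=
          Summable.tsum_le_tsum key hS (hsum2.add hgsummable)
      _ = T * Real.exp (-(m : ℝ)) + ∑' k : ℕ, g k := by
          rw [Summable.tsum_add hsum2 hgsummable, (hsum.mul_right _).tsum_eq]
      _ ≤ A + ((m : ℝ) - 1) * A := add_le_add hTm hgle
      _ ≤ A * (L + 1) := by nlinarith
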